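/- For every nonzero integer k, the negative continued fraction identity (10k−4)/5 = [[2k, 2, 2, 2, 2]] holds, and consequently σ(5, 10k−4, −1) = −4 − sgn(k). -/

import Mathlib

/-- The invariant `σ(q, p, ε)` (Fukumoto–Furuta–Ue): for integers `p ≠ 0`, `q` coprime to `p`
and a sign `ε ∈ {1, -1}`,
`σ(q,p,ε) = (1/p) ∑_{k=1}^{|p|-1} ( cot(πk/p)·cot(πkq/p) + 2 ε^k csc(πk/p)·csc(πkq/p) )`. -/
noncomputable def sigmaFFU (q p ε : ℤ) : ℝ :=
  (1 / (p : ℝ)) * ∑ k ∈ Finset.Icc 1 (p.natAbs - 1),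
    ((Real.cos (Real.pi * k / p) / Real.sin (Real.pi * k / p)) *
       (Real.cos (Real.pi * k * q / p) / Real.sin (Real.pi * k * q / p)) +
     2 * (ε : ℝ) ^ k *
       ((1 / Real.sin (Real.pi * k / p)) * (1 / Real.sin (Real.pi * k * q / p))))

/-- Negative continued fraction `[[α₁, …, αₙ]] = α₁ - 1/(α₂ - 1/(⋯ - 1/αₙ))`,
defined on lists of integers (`ncf [] = 0` is a junk value). -/
def ncf : List ℤ → ℚ
  | [] => 0
  | [a] => (a : ℚ)
  | a :: b :: l => (a : ℚ) - 1 / ncf (b :: l)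

lemma sum_aux (c : ℤ) (n : ℕ) :
    (∑ s ∈ Finset.range n, (s:ℤ)*(c - 5*(s:ℤ))) * 6
      = (n:ℤ)*((n:ℤ)-1)*(3*c - 5*(2*(n:ℤ)-1)) := by
  induction n with
  | zero => simp
  | succ n ih =>
    rw [Finset.sum_range_succ, add_mul, ih]
    push_cast
    ring

lemma sum_Ico_aux (c : ℤ) (a b : ℕ) (hab : a ≤ b) :
    (∑ s ∈ Finset.Ico a b, (s:ℤ)*(c - 5*(s:ℤ))) * 6
      = (b:ℤ)*((b:ℤ)-1)*(3*c - 5*(2*(b:ℤ)-1)) - (a:ℤ)*((a:ℤ)-1)*(3*c - 5*(2*(a:ℤ)-1)) := by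
  rw [Finset.sum_Ico_eq_sub _ hab, sub_mul, sum_aux, sum_aux]

lemma piece (m : ℕ) (d c : ℤ) (a b : ℕ) (hdvd : (m:ℤ) ∣ c + d)
    (h1 : c < 5*(a:ℤ) + (m:ℤ)) (h2 : 5*(b:ℤ) ≤ c + 5) :
    ∑ s ∈ Finset.Ico a b, (s:ℤ) * ((-(5*(s:ℤ)+d)) % (m:ℤ))
      = ∑ s ∈ Finset.Ico a b, (s:ℤ)*(c - 5*(s:ℤ)) := by
  refine Finset.sum_congr rfl fun s hs => ?_
  rw [Finset.mem_Ico] at hs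
  obtain ⟨e, he⟩ := hdvd
  have h3 : -(5*(s:ℤ)+d) = (c - 5*(s:ℤ)) + (m:ℤ) * (-e) := by linear_combination -he
  rw [h3, Int.add_mul_emod_self_left, Int.emod_eq_of_lt (by omega) (by omega)]

def Gd (m : ℕ) (d : ℤ) : ℤ := ∑ s ∈ Finset.range m, (s:ℤ) * ((-(5*(s:ℤ)+d)) % (m:ℤ))

lemma GP0 (n : ℕ) : Gd (10*n+6) (0) * 6 = (1400)*(n:ℤ)^3 + (2640)*(n:ℤ)^2 + (1630)*(n:ℤ) + (330) := by
  unfold Gd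
  rw [Finset.range_eq_Ico,
    ← Finset.sum_Ico_consecutive _ (show (0:ℕ) ≤ 1 by omega) (show (1:ℕ) ≤ 10*n+6 by omega),
    ← Finset.sum_Ico_consecutive _ (show (1:ℕ) ≤ 2*n+2 by omega) (show (2*n+2:ℕ) ≤ 10*n+6 by omega),
    ← Finset.sum_Ico_consecutive _ (show (2*n+2:ℕ) ≤ 4*n+3 by omega) (show (4*n+3:ℕ) ≤ 10*n+6 by omega),
    ← Finset.sum_Ico_consecutive _ (show (4*n+3:ℕ) ≤ 6*n+4 by omega) (show (6*n+4:ℕ) ≤ 10*n+6 by omega),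
    ← Finset.sum_Ico_consecutive _ (show (6*n+4:ℕ) ≤ 8*n+5 by omega) (show (8*n+5:ℕ) ≤ 10*n+6 by omega),
    piece (10*n+6) (0) (0) (0) (1) ⟨0, (by push_cast; ring)⟩ (by omega) (by omega),
    piece (10*n+6) (0) ((10)*(n:ℤ) + (6)) (1) (2*n+2) ⟨1, (by push_cast; ring)⟩ (by omega) (by omega),
    piece (10*n+6) (0) ((20)*(n:ℤ) + (12)) (2*n+2) (4*n+3) ⟨2, (by push_cast; ring)⟩ (by omega) (by omega),
    piece (10*n+6) (0) ((30)*(n:ℤ) + (18)) (4*n+3) (6*n+4) ⟨3, (by push_cast; ring)⟩ (by omega) (by omega),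
    piece (10*n+6) (0) ((40)*(n:ℤ) + (24)) (6*n+4) (8*n+5) ⟨4, (by push_cast; ring)⟩ (by omega) (by omega),
    piece (10*n+6) (0) ((50)*(n:ℤ) + (30)) (8*n+5) (10*n+6) ⟨5, (by push_cast; ring)⟩ (by omega) (by omega)]
  linear_combination (norm := (push_cast; ring1))
    sum_Ico_aux (0) (0) (1) (by omega) +
    sum_Ico_aux ((10)*(n:ℤ) + (6)) (1) (2*n+2) (by omega) +
    sum_Ico_aux ((20)*(n:ℤ) + (12)) (2*n+2) (4*n+3) (by omega) +
    sum_Ico_aux ((30)*(n:ℤ) + (18)) (4*n+3) (6*n+4) (by omega) +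
    sum_Ico_aux ((40)*(n:ℤ) + (24)) (6*n+4) (8*n+5) (by omega) +
    sum_Ico_aux ((50)*(n:ℤ) + (30)) (8*n+5) (10*n+6) (by omega)

lemma GP1 (n : ℕ) : Gd (10*n+6) (1) * 6 = (1400)*(n:ℤ)^3 + (2340)*(n:ℤ)^2 + (1300)*(n:ℤ) + (240) := by
  unfold Gd
  rw [Finset.range_eq_Ico,
    ← Finset.sum_Ico_consecutive _ (show (0:ℕ) ≤ 2*n+2 by omega) (show (2*n+2:ℕ) ≤ 10*n+6 by omega),
    ← Finset.sum_Ico_consecutive _ (show (2*n+2:ℕ) ≤ 4*n+3 by omega) (show (4*n+3:ℕ) ≤ 10*n+6 by omega),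
    ← Finset.sum_Ico_consecutive _ (show (4*n+3:ℕ) ≤ 6*n+4 by omega) (show (6*n+4:ℕ) ≤ 10*n+6 by omega),
    ← Finset.sum_Ico_consecutive _ (show (6*n+4:ℕ) ≤ 8*n+5 by omega) (show (8*n+5:ℕ) ≤ 10*n+6 by omega),
    piece (10*n+6) (1) ((10)*(n:ℤ) + (5)) (0) (2*n+2) ⟨1, (by push_cast; ring)⟩ (by omega) (by omega),
    piece (10*n+6) (1) ((20)*(n:ℤ) + (11)) (2*n+2) (4*n+3) ⟨2, (by push_cast; ring)⟩ (by omega) (by omega),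
    piece (10*n+6) (1) ((30)*(n:ℤ) + (17)) (4*n+3) (6*n+4) ⟨3, (by push_cast; ring)⟩ (by omega) (by omega),
    piece (10*n+6) (1) ((40)*(n:ℤ) + (23)) (6*n+4) (8*n+5) ⟨4, (by push_cast; ring)⟩ (by omega) (by omega),
    piece (10*n+6) (1) ((50)*(n:ℤ) + (29)) (8*n+5) (10*n+6) ⟨5, (by push_cast; ring)⟩ (by omega) (by omega)]
  linear_combination (norm := (push_cast; ring1))
    sum_Ico_aux ((10)*(n:ℤ) + (5)) (0) (2*n+2) (by omega) +
    sum_Ico_aux ((20)*(n:ℤ) + (11)) (2*n+2) (4*n+3) (by omega) +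
    sum_Ico_aux ((30)*(n:ℤ) + (17)) (4*n+3) (6*n+4) (by omega) +
    sum_Ico_aux ((40)*(n:ℤ) + (23)) (6*n+4) (8*n+5) (by omega) +
    sum_Ico_aux ((50)*(n:ℤ) + (29)) (8*n+5) (10*n+6) (by omega)

lemma GP5 (n : ℕ) : Gd (10*n+6) (5) * 6 = (1400)*(n:ℤ)^3 + (2340)*(n:ℤ)^2 + (1300)*(n:ℤ) + (240) := by
  unfold Gd
  rw [Finset.range_eq_Ico,
    ← Finset.sum_Ico_consecutive _ (show (0:ℕ) ≤ 2*n+1 by omega) (show (2*n+1:ℕ) ≤ 10*n+6 by omega),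
    ← Finset.sum_Ico_consecutive _ (show (2*n+1:ℕ) ≤ 4*n+2 by omega) (show (4*n+2:ℕ) ≤ 10*n+6 by omega),
    ← Finset.sum_Ico_consecutive _ (show (4*n+2:ℕ) ≤ 6*n+3 by omega) (show (6*n+3:ℕ) ≤ 10*n+6 by omega),
    ← Finset.sum_Ico_consecutive _ (show (6*n+3:ℕ) ≤ 8*n+4 by omega) (show (8*n+4:ℕ) ≤ 10*n+6 by omega),
    piece (10*n+6) (5) ((10)*(n:ℤ) + (1)) (0) (2*n+1) ⟨1, (by push_cast; ring)⟩ (by omega) (by omega),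
    piece (10*n+6) (5) ((20)*(n:ℤ) + (7)) (2*n+1) (4*n+2) ⟨2, (by push_cast; ring)⟩ (by omega) (by omega),
    piece (10*n+6) (5) ((30)*(n:ℤ) + (13)) (4*n+2) (6*n+3) ⟨3, (by push_cast; ring)⟩ (by omega) (by omega),
    piece (10*n+6) (5) ((40)*(n:ℤ) + (19)) (6*n+3) (8*n+4) ⟨4, (by push_cast; ring)⟩ (by omega) (by omega),
    piece (10*n+6) (5) ((50)*(n:ℤ) + (25)) (8*n+4) (10*n+6) ⟨5, (by push_cast; ring)⟩ (by omega) (by omega)]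
  linear_combination (norm := (push_cast; ring1))
    sum_Ico_aux ((10)*(n:ℤ) + (1)) (0) (2*n+1) (by omega) +
    sum_Ico_aux ((20)*(n:ℤ) + (7)) (2*n+1) (4*n+2) (by omega) +
    sum_Ico_aux ((30)*(n:ℤ) + (13)) (4*n+2) (6*n+3) (by omega) +
    sum_Ico_aux ((40)*(n:ℤ) + (19)) (6*n+3) (8*n+4) (by omega) +
    sum_Ico_aux ((50)*(n:ℤ) + (25)) (8*n+4) (10*n+6) (by omega)

lemma GP6 (n : ℕ) : Gd (10*n+6) (6) * 6 = (1400)*(n:ℤ)^3 + (2640)*(n:ℤ)^2 + (1630)*(n:ℤ) + (330) := by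
  unfold Gd
  rw [Finset.range_eq_Ico,
    ← Finset.sum_Ico_consecutive _ (show (0:ℕ) ≤ 2*n+1 by omega) (show (2*n+1:ℕ) ≤ 10*n+6 by omega),
    ← Finset.sum_Ico_consecutive _ (show (2*n+1:ℕ) ≤ 4*n+2 by omega) (show (4*n+2:ℕ) ≤ 10*n+6 by omega),
    ← Finset.sum_Ico_consecutive _ (show (4*n+2:ℕ) ≤ 6*n+3 by omega) (show (6*n+3:ℕ) ≤ 10*n+6 by omega),
    ← Finset.sum_Ico_consecutive _ (show (6*n+3:ℕ) ≤ 8*n+4 by omega) (show (8*n+4:ℕ) ≤ 10*n+6 by omega),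
    ← Finset.sum_Ico_consecutive _ (show (8*n+4:ℕ) ≤ 10*n+5 by omega) (show (10*n+5:ℕ) ≤ 10*n+6 by omega),
    piece (10*n+6) (6) ((10)*(n:ℤ)) (0) (2*n+1) ⟨1, (by push_cast; ring)⟩ (by omega) (by omega),
    piece (10*n+6) (6) ((20)*(n:ℤ) + (6)) (2*n+1) (4*n+2) ⟨2, (by push_cast; ring)⟩ (by omega) (by omega),
    piece (10*n+6) (6) ((30)*(n:ℤ) + (12)) (4*n+2) (6*n+3) ⟨3, (by push_cast; ring)⟩ (by omega) (by omega),
    piece (10*n+6) (6) ((40)*(n:ℤ) + (18)) (6*n+3) (8*n+4) ⟨4, (by push_cast; ring)⟩ (by omega) (by omega),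
    piece (10*n+6) (6) ((50)*(n:ℤ) + (24)) (8*n+4) (10*n+5) ⟨5, (by push_cast; ring)⟩ (by omega) (by omega),
    piece (10*n+6) (6) ((60)*(n:ℤ) + (30)) (10*n+5) (10*n+6) ⟨6, (by push_cast; ring)⟩ (by omega) (by omega)]
  linear_combination (norm := (push_cast; ring1))
    sum_Ico_aux ((10)*(n:ℤ)) (0) (2*n+1) (by omega) +
    sum_Ico_aux ((20)*(n:ℤ) + (6)) (2*n+1) (4*n+2) (by omega) +
    sum_Ico_aux ((30)*(n:ℤ) + (12)) (4*n+2) (6*n+3) (by omega) +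
    sum_Ico_aux ((40)*(n:ℤ) + (18)) (6*n+3) (8*n+4) (by omega) +
    sum_Ico_aux ((50)*(n:ℤ) + (24)) (8*n+4) (10*n+5) (by omega) +
    sum_Ico_aux ((60)*(n:ℤ) + (30)) (10*n+5) (10*n+6) (by omega)

lemma GPe (n : ℕ) : Gd (10*n+6) (5*(n:ℤ)+6) * 6 = (1550)*(n:ℤ)^3 + (2730)*(n:ℤ)^2 + (1630)*(n:ℤ) + (330) := by
  unfold Gd
  rw [Finset.range_eq_Ico,
    ← Finset.sum_Ico_consecutive _ (show (0:ℕ) ≤ 1*n+1 by omega) (show (1*n+1:ℕ) ≤ 10*n+6 by omega),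
    ← Finset.sum_Ico_consecutive _ (show (1*n+1:ℕ) ≤ 3*n+2 by omega) (show (3*n+2:ℕ) ≤ 10*n+6 by omega),
    ← Finset.sum_Ico_consecutive _ (show (3*n+2:ℕ) ≤ 5*n+3 by omega) (show (5*n+3:ℕ) ≤ 10*n+6 by omega),
    ← Finset.sum_Ico_consecutive _ (show (5*n+3:ℕ) ≤ 7*n+4 by omega) (show (7*n+4:ℕ) ≤ 10*n+6 by omega),
    ← Finset.sum_Ico_consecutive _ (show (7*n+4:ℕ) ≤ 9*n+5 by omega) (show (9*n+5:ℕ) ≤ 10*n+6 by omega),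
    piece (10*n+6) (5*(n:ℤ)+6) ((5)*(n:ℤ)) (0) (1*n+1) ⟨1, (by push_cast; ring)⟩ (by omega) (by omega),
    piece (10*n+6) (5*(n:ℤ)+6) ((15)*(n:ℤ) + (6)) (1*n+1) (3*n+2) ⟨2, (by push_cast; ring)⟩ (by omega) (by omega),
    piece (10*n+6) (5*(n:ℤ)+6) ((25)*(n:ℤ) + (12)) (3*n+2) (5*n+3) ⟨3, (by push_cast; ring)⟩ (by omega) (by omega),
    piece (10*n+6) (5*(n:ℤ)+6) ((35)*(n:ℤ) + (18)) (5*n+3) (7*n+4) ⟨4, (by push_cast; ring)⟩ (by omega) (by omega),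
    piece (10*n+6) (5*(n:ℤ)+6) ((45)*(n:ℤ) + (24)) (7*n+4) (9*n+5) ⟨5, (by push_cast; ring)⟩ (by omega) (by omega),
    piece (10*n+6) (5*(n:ℤ)+6) ((55)*(n:ℤ) + (30)) (9*n+5) (10*n+6) ⟨6, (by push_cast; ring)⟩ (by omega) (by omega)]
  linear_combination (norm := (push_cast; ring1))
    sum_Ico_aux ((5)*(n:ℤ)) (0) (1*n+1) (by omega) +
    sum_Ico_aux ((15)*(n:ℤ) + (6)) (1*n+1) (3*n+2) (by omega) +
    sum_Ico_aux ((25)*(n:ℤ) + (12)) (3*n+2) (5*n+3) (by omega) +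
    sum_Ico_aux ((35)*(n:ℤ) + (18)) (5*n+3) (7*n+4) (by omega) +
    sum_Ico_aux ((45)*(n:ℤ) + (24)) (7*n+4) (9*n+5) (by omega) +
    sum_Ico_aux ((55)*(n:ℤ) + (30)) (9*n+5) (10*n+6) (by omega)

lemma keyP (n : ℕ) : (Gd (10*n+6) 0 + Gd (10*n+6) 1 + Gd (10*n+6) 5 + Gd (10*n+6) 6 + 8 * Gd (10*n+6) (5*(n:ℤ)+6)) * 6 = (18000)*(n:ℤ)^3 + (31800)*(n:ℤ)^2 + (18900)*(n:ℤ) + (3780) := by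
  linear_combination (norm := (push_cast; ring1)) GP0 n + GP1 n + GP5 n + GP6 n + 8 * GPe n

lemma GN0 (n : ℕ) : Gd (10*n+14) (0) * 6 = (1400)*(n:ℤ)^3 + (5760)*(n:ℤ)^2 + (7870)*(n:ℤ) + (3570) := by
  unfold Gd
  rw [Finset.range_eq_Ico,
    ← Finset.sum_Ico_consecutive _ (show (0:ℕ) ≤ 1 by omega) (show (1:ℕ) ≤ 10*n+14 by omega),
    ← Finset.sum_Ico_consecutive _ (show (1:ℕ) ≤ 2*n+3 by omega) (show (2*n+3:ℕ) ≤ 10*n+14 by omega),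
    ← Finset.sum_Ico_consecutive _ (show (2*n+3:ℕ) ≤ 4*n+6 by omega) (show (4*n+6:ℕ) ≤ 10*n+14 by omega),
    ← Finset.sum_Ico_consecutive _ (show (4*n+6:ℕ) ≤ 6*n+9 by omega) (show (6*n+9:ℕ) ≤ 10*n+14 by omega),
    ← Finset.sum_Ico_consecutive _ (show (6*n+9:ℕ) ≤ 8*n+12 by omega) (show (8*n+12:ℕ) ≤ 10*n+14 by omega),
    piece (10*n+14) (0) (0) (0) (1) ⟨0, (by push_cast; ring)⟩ (by omega) (by omega),
    piece (10*n+14) (0) ((10)*(n:ℤ) + (14)) (1) (2*n+3) ⟨1, (by push_cast; ring)⟩ (by omega) (by omega),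
    piece (10*n+14) (0) ((20)*(n:ℤ) + (28)) (2*n+3) (4*n+6) ⟨2, (by push_cast; ring)⟩ (by omega) (by omega),
    piece (10*n+14) (0) ((30)*(n:ℤ) + (42)) (4*n+6) (6*n+9) ⟨3, (by push_cast; ring)⟩ (by omega) (by omega),
    piece (10*n+14) (0) ((40)*(n:ℤ) + (56)) (6*n+9) (8*n+12) ⟨4, (by push_cast; ring)⟩ (by omega) (by omega),
    piece (10*n+14) (0) ((50)*(n:ℤ) + (70)) (8*n+12) (10*n+14) ⟨5, (by push_cast; ring)⟩ (by omega) (by omega)]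
  linear_combination (norm := (push_cast; ring1))
    sum_Ico_aux (0) (0) (1) (by omega) +
    sum_Ico_aux ((10)*(n:ℤ) + (14)) (1) (2*n+3) (by omega) +
    sum_Ico_aux ((20)*(n:ℤ) + (28)) (2*n+3) (4*n+6) (by omega) +
    sum_Ico_aux ((30)*(n:ℤ) + (42)) (4*n+6) (6*n+9) (by omega) +
    sum_Ico_aux ((40)*(n:ℤ) + (56)) (6*n+9) (8*n+12) (by omega) +
    sum_Ico_aux ((50)*(n:ℤ) + (70)) (8*n+12) (10*n+14) (by omega)

lemma GN1 (n : ℕ) : Gd (10*n+14) (1) * 6 = (1400)*(n:ℤ)^3 + (5460)*(n:ℤ)^2 + (7060)*(n:ℤ) + (3024) := by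
  unfold Gd
  rw [Finset.range_eq_Ico,
    ← Finset.sum_Ico_consecutive _ (show (0:ℕ) ≤ 2*n+3 by omega) (show (2*n+3:ℕ) ≤ 10*n+14 by omega),
    ← Finset.sum_Ico_consecutive _ (show (2*n+3:ℕ) ≤ 4*n+6 by omega) (show (4*n+6:ℕ) ≤ 10*n+14 by omega),
    ← Finset.sum_Ico_consecutive _ (show (4*n+6:ℕ) ≤ 6*n+9 by omega) (show (6*n+9:ℕ) ≤ 10*n+14 by omega),
    ← Finset.sum_Ico_consecutive _ (show (6*n+9:ℕ) ≤ 8*n+12 by omega) (show (8*n+12:ℕ) ≤ 10*n+14 by omega),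
    piece (10*n+14) (1) ((10)*(n:ℤ) + (13)) (0) (2*n+3) ⟨1, (by push_cast; ring)⟩ (by omega) (by omega),
    piece (10*n+14) (1) ((20)*(n:ℤ) + (27)) (2*n+3) (4*n+6) ⟨2, (by push_cast; ring)⟩ (by omega) (by omega),
    piece (10*n+14) (1) ((30)*(n:ℤ) + (41)) (4*n+6) (6*n+9) ⟨3, (by push_cast; ring)⟩ (by omega) (by omega),
    piece (10*n+14) (1) ((40)*(n:ℤ) + (55)) (6*n+9) (8*n+12) ⟨4, (by push_cast; ring)⟩ (by omega) (by omega),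
    piece (10*n+14) (1) ((50)*(n:ℤ) + (69)) (8*n+12) (10*n+14) ⟨5, (by push_cast; ring)⟩ (by omega) (by omega)]
  linear_combination (norm := (push_cast; ring1))
    sum_Ico_aux ((10)*(n:ℤ) + (13)) (0) (2*n+3) (by omega) +
    sum_Ico_aux ((20)*(n:ℤ) + (27)) (2*n+3) (4*n+6) (by omega) +
    sum_Ico_aux ((30)*(n:ℤ) + (41)) (4*n+6) (6*n+9) (by omega) +
    sum_Ico_aux ((40)*(n:ℤ) + (55)) (6*n+9) (8*n+12) (by omega) +
    sum_Ico_aux ((50)*(n:ℤ) + (69)) (8*n+12) (10*n+14) (by omega)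

lemma GN5 (n : ℕ) : Gd (10*n+14) (5) * 6 = (1400)*(n:ℤ)^3 + (5460)*(n:ℤ)^2 + (7060)*(n:ℤ) + (3024) := by
  unfold Gd
  rw [Finset.range_eq_Ico,
    ← Finset.sum_Ico_consecutive _ (show (0:ℕ) ≤ 2*n+2 by omega) (show (2*n+2:ℕ) ≤ 10*n+14 by omega),
    ← Finset.sum_Ico_consecutive _ (show (2*n+2:ℕ) ≤ 4*n+5 by omega) (show (4*n+5:ℕ) ≤ 10*n+14 by omega),
    ← Finset.sum_Ico_consecutive _ (show (4*n+5:ℕ) ≤ 6*n+8 by omega) (show (6*n+8:ℕ) ≤ 10*n+14 by omega),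
    ← Finset.sum_Ico_consecutive _ (show (6*n+8:ℕ) ≤ 8*n+11 by omega) (show (8*n+11:ℕ) ≤ 10*n+14 by omega),
    piece (10*n+14) (5) ((10)*(n:ℤ) + (9)) (0) (2*n+2) ⟨1, (by push_cast; ring)⟩ (by omega) (by omega),
    piece (10*n+14) (5) ((20)*(n:ℤ) + (23)) (2*n+2) (4*n+5) ⟨2, (by push_cast; ring)⟩ (by omega) (by omega),
    piece (10*n+14) (5) ((30)*(n:ℤ) + (37)) (4*n+5) (6*n+8) ⟨3, (by push_cast; ring)⟩ (by omega) (by omega),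
    piece (10*n+14) (5) ((40)*(n:ℤ) + (51)) (6*n+8) (8*n+11) ⟨4, (by push_cast; ring)⟩ (by omega) (by omega),
    piece (10*n+14) (5) ((50)*(n:ℤ) + (65)) (8*n+11) (10*n+14) ⟨5, (by push_cast; ring)⟩ (by omega) (by omega)]
  linear_combination (norm := (push_cast; ring1))
    sum_Ico_aux ((10)*(n:ℤ) + (9)) (0) (2*n+2) (by omega) +
    sum_Ico_aux ((20)*(n:ℤ) + (23)) (2*n+2) (4*n+5) (by omega) +
    sum_Ico_aux ((30)*(n:ℤ) + (37)) (4*n+5) (6*n+8) (by omega) +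
    sum_Ico_aux ((40)*(n:ℤ) + (51)) (6*n+8) (8*n+11) (by omega) +
    sum_Ico_aux ((50)*(n:ℤ) + (65)) (8*n+11) (10*n+14) (by omega)

lemma GN6 (n : ℕ) : Gd (10*n+14) (6) * 6 = (1400)*(n:ℤ)^3 + (5760)*(n:ℤ)^2 + (7870)*(n:ℤ) + (3570) := by
  unfold Gd
  rw [Finset.range_eq_Ico,
    ← Finset.sum_Ico_consecutive _ (show (0:ℕ) ≤ 2*n+2 by omega) (show (2*n+2:ℕ) ≤ 10*n+14 by omega),
    ← Finset.sum_Ico_consecutive _ (show (2*n+2:ℕ) ≤ 4*n+5 by omega) (show (4*n+5:ℕ) ≤ 10*n+14 by omega),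
    ← Finset.sum_Ico_consecutive _ (show (4*n+5:ℕ) ≤ 6*n+8 by omega) (show (6*n+8:ℕ) ≤ 10*n+14 by omega),
    ← Finset.sum_Ico_consecutive _ (show (6*n+8:ℕ) ≤ 8*n+11 by omega) (show (8*n+11:ℕ) ≤ 10*n+14 by omega),
    ← Finset.sum_Ico_consecutive _ (show (8*n+11:ℕ) ≤ 10*n+13 by omega) (show (10*n+13:ℕ) ≤ 10*n+14 by omega),
    piece (10*n+14) (6) ((10)*(n:ℤ) + (8)) (0) (2*n+2) ⟨1, (by push_cast; ring)⟩ (by omega) (by omega),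
    piece (10*n+14) (6) ((20)*(n:ℤ) + (22)) (2*n+2) (4*n+5) ⟨2, (by push_cast; ring)⟩ (by omega) (by omega),
    piece (10*n+14) (6) ((30)*(n:ℤ) + (36)) (4*n+5) (6*n+8) ⟨3, (by push_cast; ring)⟩ (by omega) (by omega),
    piece (10*n+14) (6) ((40)*(n:ℤ) + (50)) (6*n+8) (8*n+11) ⟨4, (by push_cast; ring)⟩ (by omega) (by omega),
    piece (10*n+14) (6) ((50)*(n:ℤ) + (64)) (8*n+11) (10*n+13) ⟨5, (by push_cast; ring)⟩ (by omega) (by omega),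
    piece (10*n+14) (6) ((60)*(n:ℤ) + (78)) (10*n+13) (10*n+14) ⟨6, (by push_cast; ring)⟩ (by omega) (by omega)]
  linear_combination (norm := (push_cast; ring1))
    sum_Ico_aux ((10)*(n:ℤ) + (8)) (0) (2*n+2) (by omega) +
    sum_Ico_aux ((20)*(n:ℤ) + (22)) (2*n+2) (4*n+5) (by omega) +
    sum_Ico_aux ((30)*(n:ℤ) + (36)) (4*n+5) (6*n+8) (by omega) +
    sum_Ico_aux ((40)*(n:ℤ) + (50)) (6*n+8) (8*n+11) (by omega) +
    sum_Ico_aux ((50)*(n:ℤ) + (64)) (8*n+11) (10*n+13) (by omega) +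
    sum_Ico_aux ((60)*(n:ℤ) + (78)) (10*n+13) (10*n+14) (by omega)

lemma GNe (n : ℕ) : Gd (10*n+14) (-5*(n:ℤ)-4) * 6 = (1550)*(n:ℤ)^3 + (5970)*(n:ℤ)^2 + (7630)*(n:ℤ) + (3234) := by
  unfold Gd
  rw [Finset.range_eq_Ico,
    ← Finset.sum_Ico_consecutive _ (show (0:ℕ) ≤ 1*n+1 by omega) (show (1*n+1:ℕ) ≤ 10*n+14 by omega),
    ← Finset.sum_Ico_consecutive _ (show (1*n+1:ℕ) ≤ 3*n+4 by omega) (show (3*n+4:ℕ) ≤ 10*n+14 by omega),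
    ← Finset.sum_Ico_consecutive _ (show (3*n+4:ℕ) ≤ 5*n+7 by omega) (show (5*n+7:ℕ) ≤ 10*n+14 by omega),
    ← Finset.sum_Ico_consecutive _ (show (5*n+7:ℕ) ≤ 7*n+10 by omega) (show (7*n+10:ℕ) ≤ 10*n+14 by omega),
    ← Finset.sum_Ico_consecutive _ (show (7*n+10:ℕ) ≤ 9*n+13 by omega) (show (9*n+13:ℕ) ≤ 10*n+14 by omega),
    piece (10*n+14) (-5*(n:ℤ)-4) ((5)*(n:ℤ) + (4)) (0) (1*n+1) ⟨0, (by push_cast; ring)⟩ (by omega) (by omega),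
    piece (10*n+14) (-5*(n:ℤ)-4) ((15)*(n:ℤ) + (18)) (1*n+1) (3*n+4) ⟨1, (by push_cast; ring)⟩ (by omega) (by omega),
    piece (10*n+14) (-5*(n:ℤ)-4) ((25)*(n:ℤ) + (32)) (3*n+4) (5*n+7) ⟨2, (by push_cast; ring)⟩ (by omega) (by omega),
    piece (10*n+14) (-5*(n:ℤ)-4) ((35)*(n:ℤ) + (46)) (5*n+7) (7*n+10) ⟨3, (by push_cast; ring)⟩ (by omega) (by omega),
    piece (10*n+14) (-5*(n:ℤ)-4) ((45)*(n:ℤ) + (60)) (7*n+10) (9*n+13) ⟨4, (by push_cast; ring)⟩ (by omega) (by omega),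
    piece (10*n+14) (-5*(n:ℤ)-4) ((55)*(n:ℤ) + (74)) (9*n+13) (10*n+14) ⟨5, (by push_cast; ring)⟩ (by omega) (by omega)]
  linear_combination (norm := (push_cast; ring1))
    sum_Ico_aux ((5)*(n:ℤ) + (4)) (0) (1*n+1) (by omega) +
    sum_Ico_aux ((15)*(n:ℤ) + (18)) (1*n+1) (3*n+4) (by omega) +
    sum_Ico_aux ((25)*(n:ℤ) + (32)) (3*n+4) (5*n+7) (by omega) +
    sum_Ico_aux ((35)*(n:ℤ) + (46)) (5*n+7) (7*n+10) (by omega) +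
    sum_Ico_aux ((45)*(n:ℤ) + (60)) (7*n+10) (9*n+13) (by omega) +
    sum_Ico_aux ((55)*(n:ℤ) + (74)) (9*n+13) (10*n+14) (by omega)

lemma keyN (n : ℕ) : (Gd (10*n+14) 0 + Gd (10*n+14) 1 + Gd (10*n+14) 5 + Gd (10*n+14) 6 + 8 * Gd (10*n+14) (-5*(n:ℤ)-4)) * 6 = (18000)*(n:ℤ)^3 + (70200)*(n:ℤ)^2 + (90900)*(n:ℤ) + (39060) := by
  linear_combination (norm := (push_cast; ring1)) GN0 n + GN1 n + GN5 n + GN6 n + 8 * GNe n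

noncomputable def Ee (p r : ℤ) : ℂ := Complex.exp ((Real.pi * r / p : ℝ) * Complex.I)

lemma Ee_def' (p r : ℤ) :
    Ee p r = Complex.exp ((Real.pi:ℂ) * (r:ℂ) / (p:ℂ) * Complex.I) := by
  unfold Ee; congr 1; push_cast; ring

lemma Ee_add (p r s : ℤ) : Ee p r * Ee p s = Ee p (r + s) := by
  rw [Ee_def', Ee_def', Ee_def', ← Complex.exp_add]
  congr 1
  push_cast
  ring

lemma Ee_zero (p : ℤ) : Ee p 0 = 1 := by
  rw [Ee_def']; norm_num

lemma Ee_pow (p r : ℤ) (c : ℕ) : Ee p r ^ c = Ee p (r * c) := by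
  rw [Ee_def', Ee_def', ← Complex.exp_nat_mul]
  congr 1
  push_cast
  ring

lemma Ee_neg_pi (p : ℤ) (j : ℕ) (hp : p ≠ 0) : Ee p ((j:ℤ) * p) = (-1 : ℂ) ^ j := by
  have hpC : (p:ℂ) ≠ 0 := Int.cast_ne_zero.mpr hp
  have harg : (Real.pi:ℂ) * ((((j:ℤ) * p) : ℤ):ℂ) / (p:ℂ) * Complex.I
      = (j:ℕ) * ((Real.pi:ℂ) * Complex.I) := by
    push_cast; field_simp
  rw [Ee_def', harg, Complex.exp_nat_mul, Complex.exp_pi_mul_I]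

lemma Ee_one_of_dvd (p r : ℤ) (hp : p ≠ 0) (hdvd : p ∣ r) : Ee p (2 * r) = 1 := by
  obtain ⟨c, rfl⟩ := hdvd
  have hpC : (p:ℂ) ≠ 0 := Int.cast_ne_zero.mpr hp
  have harg : (Real.pi:ℂ) * (((2 * (p * c)) : ℤ):ℂ) / (p:ℂ) * Complex.I
      = (c:ℤ) * (2 * (Real.pi:ℂ) * Complex.I) := by
    push_cast; field_simp
  rw [Ee_def', harg, Complex.exp_int_mul_two_pi_mul_I]

lemma Ee_pow_natAbs (p r : ℤ) (hp : p ≠ 0) : Ee p (2 * r) ^ p.natAbs = 1 := by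
  rw [Ee_pow]
  rcases Int.natAbs_eq p with he | he
  · rw [show (2 * r * (p.natAbs:ℤ)) = 2 * (p * r) by rw [← he]; ring]
    exact Ee_one_of_dvd p (p*r) hp ⟨r, rfl⟩
  · rw [show (2 * r * (p.natAbs:ℤ)) = 2 * (p * (-r)) by rw [show ((p.natAbs:ℤ)) = -p by omega]; ring]
    exact Ee_one_of_dvd p (p*(-r)) hp ⟨-r, rfl⟩

lemma Ee_eq_one_iff (p r : ℤ) (hp : p ≠ 0) : Ee p (2 * r) = 1 ↔ p ∣ r := by
  constructor
  · intro he
    rw [Ee_def', Complex.exp_eq_one_iff] at he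
    obtain ⟨c, hc⟩ := he
    have hpC : (p:ℂ) ≠ 0 := Int.cast_ne_zero.mpr hp
    have hπ : (Real.pi:ℂ) ≠ 0 := Complex.ofReal_ne_zero.mpr Real.pi_ne_zero
    have hI : (Complex.I : ℂ) ≠ 0 := Complex.I_ne_zero
    have h2 : ((r:ℂ)) = (c:ℂ) * (p:ℂ) := by
      field_simp at hc
      have hne : (2*(Real.pi:ℂ)*Complex.I) ≠ 0 := mul_ne_zero (mul_ne_zero two_ne_zero hπ) hI
      apply mul_left_cancel₀ hne
      push_cast at hc
      linear_combination ((Real.pi:ℂ) * Complex.I) * hc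
    have : (r:ℂ) = ((p*c : ℤ) : ℂ) := by push_cast; linear_combination h2
    exact ⟨c, by exact_mod_cast this⟩
  · exact Ee_one_of_dvd p r hp

lemma csin (x : ℝ) : (Real.sin x : ℂ) * (2 * Complex.I * Complex.exp ((x:ℂ) * Complex.I))
    = Complex.exp ((x:ℂ) * Complex.I) ^ 2 - 1 := by
  rw [Complex.ofReal_sin, Complex.sin]
  rw [show -(x:ℂ) * Complex.I = -((x:ℂ) * Complex.I) by ring, Complex.exp_neg]
  have h := Complex.exp_ne_zero ((x:ℂ) * Complex.I)
  field_simp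
  linear_combination (1 - Complex.exp ((x:ℂ) * Complex.I)^2) * Complex.I_sq

lemma ccos (x : ℝ) : (Real.cos x : ℂ) * (2 * Complex.exp ((x:ℂ) * Complex.I))
    = Complex.exp ((x:ℂ) * Complex.I) ^ 2 + 1 := by
  rw [Complex.ofReal_cos, Complex.cos]
  rw [show -(x:ℂ) * Complex.I = -((x:ℂ) * Complex.I) by ring, Complex.exp_neg]
  have h := Complex.exp_ne_zero ((x:ℂ) * Complex.I)
  field_simp

lemma term_identity (p : ℤ) (hp : p ≠ 0) (j : ℕ) (hj1 : ¬ (p ∣ (j:ℤ))) (hj5 : ¬ (p ∣ 5*(j:ℤ))) :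
    ((Real.cos (Real.pi * j / p) / Real.sin (Real.pi * j / p) *
      (Real.cos (Real.pi * j * 5 / p) / Real.sin (Real.pi * j * 5 / p)) +
      2 * (-1:ℝ)^j * (1 / Real.sin (Real.pi * j / p) * (1 / Real.sin (Real.pi * j * 5 / p)))) : ℝ)
    * ((Ee p j ^ 2 - 1) * (Ee p j ^ 10 - 1))
    = -((Ee p j ^ 2 + 1) * (Ee p j ^ 10 + 1) + 8 * (-1:ℂ)^j * Ee p j ^ 6) := by
  set A : ℝ := Real.pi * j / p with hA
  set B : ℝ := Real.pi * j * 5 / p with hB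
  set z : ℂ := Ee p (j:ℤ) with hzdef
  have hz : z ≠ 0 := by rw [hzdef, Ee_def']; exact Complex.exp_ne_zero _
  have hEa : Complex.exp ((A:ℂ) * Complex.I) = z := by
    rw [show ((A:ℝ):ℂ) * Complex.I = (Real.pi:ℂ) * (((j:ℤ)):ℂ) / (p:ℂ) * Complex.I by
      rw [hA]; push_cast; ring, ← Ee_def', hzdef]
  have hEb : Complex.exp ((B:ℂ) * Complex.I) = z ^ 5 := by
    have h5 : z ^ 5 = Ee p ((j:ℤ) * ((5:ℕ):ℤ)) := by rw [hzdef, Ee_pow]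
    rw [show ((B:ℝ):ℂ) * Complex.I = (Real.pi:ℂ) * ((((j:ℤ) * ((5:ℕ):ℤ)):ℤ):ℂ) / (p:ℂ) * Complex.I by
      rw [hB]; push_cast; ring, ← Ee_def', h5]
  have hz2 : z ^ 2 = Ee p (2*(j:ℤ)) := by rw [hzdef, Ee_pow]; congr 1; push_cast; ring
  have hz10 : z ^ 10 = Ee p (2*(5*(j:ℤ))) := by rw [hzdef, Ee_pow]; congr 1; push_cast; ring
  have h21 : z ^ 2 - 1 ≠ 0 := by
    rw [sub_ne_zero, hz2]
    exact fun hcon => hj1 ((Ee_eq_one_iff p j hp).mp hcon)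
  have h101 : z ^ 10 - 1 ≠ 0 := by
    rw [sub_ne_zero, hz10]
    exact fun hcon => hj5 ((Ee_eq_one_iff p (5*(j:ℤ)) hp).mp hcon)
  have hsa := csin A; rw [hEa] at hsa
  have hsb := csin B; rw [hEb] at hsb
  have hca := ccos A; rw [hEa] at hca
  have hcb := ccos B; rw [hEb] at hcb
  rw [show ((z^5)^2 : ℂ) = z ^ 10 by ring] at hsb hcb
  have hI : (Complex.I : ℂ) ≠ 0 := Complex.I_ne_zero
  have h2Iz : (2 * Complex.I * z : ℂ) ≠ 0 := by
    apply mul_ne_zero (mul_ne_zero two_ne_zero hI) hz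
  have h2Iz5 : (2 * Complex.I * z^5 : ℂ) ≠ 0 := by
    apply mul_ne_zero (mul_ne_zero two_ne_zero hI) (pow_ne_zero _ hz)
  have hsa' : (Real.sin A : ℂ) = (z^2 - 1) / (2 * Complex.I * z) := by
    rw [eq_div_iff h2Iz]; exact hsa
  have hsb' : (Real.sin B : ℂ) = (z^10 - 1) / (2 * Complex.I * z^5) := by
    rw [eq_div_iff h2Iz5]; exact hsb
  have hca' : (Real.cos A : ℂ) = (z^2 + 1) / (2 * z) := by
    rw [eq_div_iff (mul_ne_zero two_ne_zero hz)]; exact hca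
  have hcb' : (Real.cos B : ℂ) = (z^10 + 1) / (2 * z^5) := by
    rw [eq_div_iff (mul_ne_zero two_ne_zero (pow_ne_zero _ hz))]; exact hcb
  have hsa0 : Complex.sin (A:ℂ) ≠ 0 := by
    rw [← Complex.ofReal_sin, hsa']; exact div_ne_zero h21 h2Iz
  have hsb0 : Complex.sin (B:ℂ) ≠ 0 := by
    rw [← Complex.ofReal_sin, hsb']; exact div_ne_zero h101 h2Iz5
  rw [Complex.ofReal_sin] at hsa hsb
  rw [Complex.ofReal_cos] at hca hcb
  have key : (Complex.cos (A:ℂ) * Complex.cos (B:ℂ) + 2*(-1:ℂ)^j) * ((z^2-1)*(z^10-1))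
      = -((z^2+1)*(z^10+1) + 8*(-1:ℂ)^j*z^6) * (Complex.sin (A:ℂ) * Complex.sin (B:ℂ)) := by
    linear_combination (-(Complex.cos (A:ℂ)*Complex.cos (B:ℂ)+2*(-1:ℂ)^j))*((z^10-1)*hsa + (Complex.sin (A:ℂ)*2*Complex.I*z)*hsb)
      - (Complex.sin (A:ℂ)*Complex.sin (B:ℂ))*((z^10+1)*hca + (Complex.cos (A:ℂ)*2*z)*hcb)
      + (Complex.cos (A:ℂ)*Complex.cos (B:ℂ)+2*(-1:ℂ)^j)*Complex.sin (A:ℂ)*Complex.sin (B:ℂ)*4*z^6*Complex.I_sq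
  push_cast
  have hT : Complex.cos (A:ℂ) / Complex.sin (A:ℂ) * (Complex.cos (B:ℂ) / Complex.sin (B:ℂ))
      + 2*(-1:ℂ)^j * (1/Complex.sin (A:ℂ) * (1/Complex.sin (B:ℂ)))
      = (Complex.cos (A:ℂ) * Complex.cos (B:ℂ) + 2*(-1:ℂ)^j) / (Complex.sin (A:ℂ) * Complex.sin (B:ℂ)) := by
    field_simp
  rw [hT, div_mul_eq_mul_div, div_eq_iff (mul_ne_zero hsa0 hsb0)]
  linear_combination key

lemma weighted_geom (x : ℂ) (n : ℕ) :
    (x - 1) * ∑ t ∈ Finset.range n, (t:ℂ) * x^t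
      = ((n:ℂ)-1)*x^n - ∑ t ∈ Finset.range n, x^t + 1 := by
  induction n with
  | zero => simp
  | succ n ih =>
    rw [Finset.sum_range_succ, Finset.sum_range_succ (f := fun t => x^t), mul_add, ih]
    push_cast
    ring

lemma recip_sum (p : ℤ) (hp : p ≠ 0) (r : ℤ) (hr : ¬ p ∣ r) :
    (Ee p (2*r) - 1) * ∑ t ∈ Finset.range p.natAbs, (t:ℂ) * Ee p (2*r) ^ t
      = (p.natAbs : ℂ) := by
  have hx1 : Ee p (2*r) ≠ 1 := fun hc => hr ((Ee_eq_one_iff p r hp).mp hc)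
  have hxm : Ee p (2*r) ^ p.natAbs = 1 := Ee_pow_natAbs p r hp
  have hgeom : ∑ t ∈ Finset.range p.natAbs, Ee p (2*r) ^ t = 0 := by
    rw [geom_sum_eq hx1, hxm]
    simp
  rw [weighted_geom, hxm, hgeom]
  ring

lemma Cval (p : ℤ) (hp : p ≠ 0) (r : ℤ) :
    ∑ j ∈ Finset.Icc 1 (p.natAbs - 1), Ee p (2*r*(j:ℤ))
      = (if p ∣ r then ((p.natAbs : ℕ):ℂ) else 0) - 1 := by
  have hm : 1 ≤ p.natAbs := by
    have := Int.natAbs_pos.mpr hp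
    omega
  have hIcc : Finset.Icc 1 (p.natAbs - 1) = Finset.Ico 1 p.natAbs := by
    rw [← Finset.Ico_add_one_right_eq_Icc]
    congr 1
    omega
  have hpow : ∀ j : ℕ, Ee p (2*r*(j:ℤ)) = Ee p (2*r) ^ j := by
    intro j
    rw [Ee_pow]
  rw [hIcc]
  rw [Finset.sum_congr rfl (fun j _ => hpow j)]
  have hsplit : Ee p (2*r) ^ 0 + ∑ j ∈ Finset.Ico 1 p.natAbs, Ee p (2*r) ^ j
      = ∑ j ∈ Finset.range p.natAbs, Ee p (2*r) ^ j := by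
    rw [Finset.range_eq_Ico]
    have := Finset.sum_Ico_consecutive (fun j => Ee p (2*r) ^ j)
      (show 0 ≤ 1 by omega) (show 1 ≤ p.natAbs by omega)
    rw [← this]
    simp
  by_cases hdvd : p ∣ r
  · rw [if_pos hdvd]
    have hx1 : Ee p (2*r) = 1 := Ee_one_of_dvd p r hp hdvd
    rw [hx1]
    simp only [one_pow, Finset.sum_const, Nat.card_Ico, nsmul_eq_mul, mul_one]
    rw [Nat.cast_sub hm]
    simp
  · rw [if_neg hdvd]
    have hx1 : Ee p (2*r) ≠ 1 := fun hc => hdvd ((Ee_eq_one_iff p r hp).mp hc)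
    have hxm : Ee p (2*r) ^ p.natAbs = 1 := Ee_pow_natAbs p r hp
    have hgeom : ∑ t ∈ Finset.range p.natAbs, Ee p (2*r) ^ t = 0 := by
      rw [geom_sum_eq hx1, hxm]
      simp
    have := hsplit
    rw [hgeom] at this
    simp only [pow_zero] at this
    linear_combination this

lemma step_j (p hh : ℤ) (hph : p = 2 * hh) (hcop : IsCoprime p 5) (hp : p ≠ 0)
    (j : ℕ) (hj : j ∈ Finset.Icc 1 (p.natAbs - 1)) :
    (((Real.cos (Real.pi * j / p) / Real.sin (Real.pi * j / p) *
      (Real.cos (Real.pi * j * 5 / p) / Real.sin (Real.pi * j * 5 / p)) +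
      2 * (-1:ℝ)^j * (1 / Real.sin (Real.pi * j / p) * (1 / Real.sin (Real.pi * j * 5 / p)))) : ℝ) : ℂ)
    * ((p.natAbs:ℂ))^2
    = ∑ t ∈ Finset.range p.natAbs, ∑ s ∈ Finset.range p.natAbs,
        (-(((t:ℂ) * (s:ℂ)) * (Ee p (2*((t:ℤ)+5*(s:ℤ))*(j:ℤ)) + Ee p (2*((t:ℤ)+5*(s:ℤ)+1)*(j:ℤ))
          + Ee p (2*((t:ℤ)+5*(s:ℤ)+5)*(j:ℤ)) + Ee p (2*((t:ℤ)+5*(s:ℤ)+6)*(j:ℤ))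
          + 8 * Ee p (2*((t:ℤ)+5*(s:ℤ)+(3+hh))*(j:ℤ))))) := by
  rw [Finset.mem_Icc] at hj
  have hm : 1 ≤ p.natAbs := by
    have := Int.natAbs_pos.mpr hp
    omega
  have hj1 : ¬ (p ∣ (j:ℤ)) := by
    intro hd
    have h2 : (p.natAbs:ℤ) ∣ (j:ℤ) := Int.natAbs_dvd.mpr hd
    have h3 : p.natAbs ∣ j := Int.natCast_dvd_natCast.mp h2
    have h4 : p.natAbs ≤ j := Nat.le_of_dvd (by omega) h3
    omega
  have hj5 : ¬ (p ∣ 5*(j:ℤ)) := by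
    intro hd
    exact hj1 (hcop.dvd_of_dvd_mul_right (by rwa [mul_comm] at hd))
  have hr1 := recip_sum p hp (j:ℤ) hj1
  have hr5 := recip_sum p hp (5*(j:ℤ)) hj5
  have hti := term_identity p hp j hj1 hj5
  set z : ℂ := Ee p (j:ℤ) with hz
  have hx : Ee p (2*(j:ℤ)) = z^2 := by rw [hz, Ee_pow]; congr 1; push_cast; ring
  have hy : Ee p (2*(5*(j:ℤ))) = z^10 := by rw [hz, Ee_pow]; congr 1; push_cast; ring
  rw [hx] at hr1
  rw [hy] at hr5
  calc _ = (((Real.cos (Real.pi * j / p) / Real.sin (Real.pi * j / p) *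
      (Real.cos (Real.pi * j * 5 / p) / Real.sin (Real.pi * j * 5 / p)) +
      2 * (-1:ℝ)^j * (1 / Real.sin (Real.pi * j / p) * (1 / Real.sin (Real.pi * j * 5 / p)))) : ℝ) : ℂ)
      * (((z^2 - 1) * ∑ t ∈ Finset.range p.natAbs, (t:ℂ) * (z^2) ^ t)
        * ((z^10 - 1) * ∑ s ∈ Finset.range p.natAbs, (s:ℂ) * (z^10) ^ s)) := by
        rw [hr1, hr5]; ring
    _ = (-((z ^ 2 + 1) * (z ^ 10 + 1) + 8 * (-1:ℂ)^j * z ^ 6))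
        * ((∑ t ∈ Finset.range p.natAbs, (t:ℂ) * (z^2) ^ t)
          * (∑ s ∈ Finset.range p.natAbs, (s:ℂ) * (z^10) ^ s)) := by
        rw [← hti]; ring
    _ = ∑ t ∈ Finset.range p.natAbs, ∑ s ∈ Finset.range p.natAbs,
        ((-((z ^ 2 + 1) * (z ^ 10 + 1) + 8 * (-1:ℂ)^j * z ^ 6)) * (((t:ℂ) * (z^2) ^ t) * ((s:ℂ) * (z^10) ^ s))) := by
        rw [Finset.sum_mul_sum, Finset.mul_sum]
        refine Finset.sum_congr rfl fun t _ => ?_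
        rw [Finset.mul_sum]
    _ = _ := by
        refine Finset.sum_congr rfl fun t _ => Finset.sum_congr rfl fun s _ => ?_
        have e1 : Ee p (2*((t:ℤ)+5*(s:ℤ))*(j:ℤ)) = z^(2*t+10*s) := by
          rw [hz, Ee_pow]; congr 1; push_cast; ring
        have e2 : Ee p (2*((t:ℤ)+5*(s:ℤ)+1)*(j:ℤ)) = z^(2*t+10*s+2) := by
          rw [hz, Ee_pow]; congr 1; push_cast; ring
        have e3 : Ee p (2*((t:ℤ)+5*(s:ℤ)+5)*(j:ℤ)) = z^(2*t+10*s+10) := by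
          rw [hz, Ee_pow]; congr 1; push_cast; ring
        have e4 : Ee p (2*((t:ℤ)+5*(s:ℤ)+6)*(j:ℤ)) = z^(2*t+10*s+12) := by
          rw [hz, Ee_pow]; congr 1; push_cast; ring
        have e5 : Ee p (2*((t:ℤ)+5*(s:ℤ)+(3+hh))*(j:ℤ)) = z^(2*t+10*s+6) * (-1:ℂ)^j := by
          rw [← Ee_neg_pi p j hp, hz, Ee_pow, Ee_add]
          congr 1
          rw [hph]
          push_cast
          ring
        rw [e1, e2, e3, e4, e5]
        ring

lemma inner_collapse (p : ℤ) (hp : p ≠ 0) (s : ℕ) (d : ℤ) :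
    ∑ t ∈ Finset.range p.natAbs, (t:ℂ) * (if p ∣ ((t:ℤ)+5*(s:ℤ)+d) then ((p.natAbs:ℕ):ℂ) else 0)
      = (((-(5*(s:ℤ)+d)) % ((p.natAbs:ℕ):ℤ) : ℤ):ℂ) * ((p.natAbs:ℕ):ℂ) := by
  set m := p.natAbs with hm
  have hm0 : 0 < m := Int.natAbs_pos.mpr hp
  have hmz : ((m:ℕ):ℤ) ≠ 0 := by exact_mod_cast (by omega : (m:ℕ) ≠ 0)
  set ρ : ℤ := (-(5*(s:ℤ)+d)) % (m:ℤ) with hρ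
  have hρ0 : 0 ≤ ρ := Int.emod_nonneg _ hmz
  have hρm : ρ < (m:ℤ) := Int.emod_lt_of_pos _ (by exact_mod_cast hm0)
  set t₀ : ℕ := ρ.toNat with ht₀def
  have ht₀ : (t₀:ℤ) = ρ := Int.toNat_of_nonneg hρ0
  have hdvd0 : (m:ℤ) ∣ (ρ + 5*(s:ℤ) + d) := by
    refine ⟨-((-(5*(s:ℤ)+d)) / (m:ℤ)), ?_⟩
    rw [hρ, Int.emod_def]
    ring
  have key : ∀ t ∈ Finset.range m, ((p ∣ ((t:ℤ)+5*(s:ℤ)+d)) ↔ t = t₀) := by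
    intro t ht
    rw [Finset.mem_range] at ht
    constructor
    · intro hd
      have h2 : (m:ℤ) ∣ ((t:ℤ)+5*(s:ℤ)+d) := Int.natAbs_dvd.mpr hd
      have h3 : (m:ℤ) ∣ ((t:ℤ) - ρ) := by
        have := dvd_sub h2 hdvd0
        have he : ((t:ℤ)+5*(s:ℤ)+d) - (ρ + 5*(s:ℤ) + d) = (t:ℤ) - ρ := by ring
        rwa [he] at this
      have h4 : (t:ℤ) - ρ = 0 := by
        rcases h3 with ⟨c, hc⟩
        have hb1 : (t:ℤ) < m := by exact_mod_cast ht
        have hb2 : (0:ℤ) ≤ t := Int.ofNat_nonneg t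
        rcases lt_trichotomy c 0 with hc0 | hc0 | hc0
        · nlinarith [hc, hb1, hb2, hρ0, hρm]
        · rw [hc0] at hc; simpa using hc
        · nlinarith [hc, hb1, hb2, hρ0, hρm]
      omega
    · intro h
      subst h
      apply Int.natAbs_dvd.mp
      have : ((t₀:ℤ)+5*(s:ℤ)+d) = (ρ + 5*(s:ℤ) + d) := by rw [ht₀]
      rw [this]
      exact hdvd0
  calc ∑ t ∈ Finset.range m, (t:ℂ) * (if p ∣ ((t:ℤ)+5*(s:ℤ)+d) then ((m:ℕ):ℂ) else 0)
      = ∑ t ∈ Finset.range m, (if t = t₀ then (t:ℂ) * ((m:ℕ):ℂ) else 0) := by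
        refine Finset.sum_congr rfl fun t ht => ?_
        rw [if_congr (key t ht) rfl rfl, mul_ite, mul_zero]
    _ = (t₀:ℂ) * ((m:ℕ):ℂ) := by
        rw [Finset.sum_ite_eq' (Finset.range m) t₀ (fun t => (t:ℂ) * ((m:ℕ):ℂ))]
        rw [if_pos (Finset.mem_range.mpr (by omega : t₀ < m))]
    _ = (ρ:ℂ) * ((m:ℕ):ℂ) := by
        congr 1
        exact_mod_cast congrArg (Int.cast : ℤ → ℂ) ht₀

lemma sum_lin (σ : Finset ℕ) (c : ℂ) (f1 f2 f3 f4 f5 : ℕ → ℂ) :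
    ∑ j ∈ σ, -(c * (f1 j + f2 j + f3 j + f4 j + 8 * f5 j))
      = -(c * ((∑ j ∈ σ, f1 j) + (∑ j ∈ σ, f2 j) + (∑ j ∈ σ, f3 j) + (∑ j ∈ σ, f4 j)
          + 8 * (∑ j ∈ σ, f5 j))) := by
  have h : ∀ j, -(c * (f1 j + f2 j + f3 j + f4 j + 8 * f5 j))
      = (-(c * f1 j)) + (-(c * f2 j)) + (-(c * f3 j)) + (-(c * f4 j)) + (-(8 * c * f5 j)) :=
    fun j => by ring
  rw [Finset.sum_congr rfl (fun j _ => h j), Finset.sum_add_distrib, Finset.sum_add_distrib,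
    Finset.sum_add_distrib, Finset.sum_add_distrib, Finset.sum_neg_distrib, Finset.sum_neg_distrib,
    Finset.sum_neg_distrib, Finset.sum_neg_distrib, Finset.sum_neg_distrib,
    ← Finset.mul_sum, ← Finset.mul_sum, ← Finset.mul_sum, ← Finset.mul_sum, ← Finset.mul_sum]
  ring

lemma sum_lin2 (σ : Finset ℕ) (c : ℂ) (f1 f2 f3 f4 f5 g : ℕ → ℂ) :
    ∑ t ∈ σ, (-((g t * c) * (f1 t + f2 t + f3 t + f4 t + 8 * f5 t)) + 12 * (g t * c))
      = -(c * ((∑ t ∈ σ, g t * f1 t) + (∑ t ∈ σ, g t * f2 t) + (∑ t ∈ σ, g t * f3 t)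
          + (∑ t ∈ σ, g t * f4 t) + 8 * (∑ t ∈ σ, g t * f5 t)))
        + 12 * (c * (∑ t ∈ σ, g t)) := by
  have h : ∀ t, (-((g t * c) * (f1 t + f2 t + f3 t + f4 t + 8 * f5 t)) + 12 * (g t * c))
      = (-(c * (g t * f1 t))) + (-(c * (g t * f2 t))) + (-(c * (g t * f3 t)))
        + (-(c * (g t * f4 t))) + (-(8 * c * (g t * f5 t))) + (12 * c) * g t :=
    fun t => by ring
  rw [Finset.sum_congr rfl (fun t _ => h t), Finset.sum_add_distrib, Finset.sum_add_distrib,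
    Finset.sum_add_distrib, Finset.sum_add_distrib, Finset.sum_add_distrib,
    Finset.sum_neg_distrib, Finset.sum_neg_distrib,
    Finset.sum_neg_distrib, Finset.sum_neg_distrib, Finset.sum_neg_distrib,
    ← Finset.mul_sum, ← Finset.mul_sum, ← Finset.mul_sum, ← Finset.mul_sum, ← Finset.mul_sum,
    ← Finset.mul_sum]
  ring

lemma sum_lin3 (σ : Finset ℕ) (mC : ℂ) (f1 f2 f3 f4 f5 g : ℕ → ℂ) (T : ℂ) :
    ∑ s ∈ σ, (-(g s * (f1 s * mC + f2 s * mC + f3 s * mC + f4 s * mC + 8 * (f5 s * mC))) + 12 * (g s * T))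
      = -(mC * ((∑ s ∈ σ, g s * f1 s) + (∑ s ∈ σ, g s * f2 s) + (∑ s ∈ σ, g s * f3 s)
          + (∑ s ∈ σ, g s * f4 s) + 8 * (∑ s ∈ σ, g s * f5 s)))
        + 12 * ((∑ s ∈ σ, g s) * T) := by
  have h : ∀ s, (-(g s * (f1 s * mC + f2 s * mC + f3 s * mC + f4 s * mC + 8 * (f5 s * mC))) + 12 * (g s * T))
      = (-(mC * (g s * f1 s))) + (-(mC * (g s * f2 s))) + (-(mC * (g s * f3 s)))
        + (-(mC * (g s * f4 s))) + (-(8 * mC * (g s * f5 s))) + (12 * T) * g s :=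
    fun s => by ring
  rw [Finset.sum_congr rfl (fun s _ => h s), Finset.sum_add_distrib, Finset.sum_add_distrib,
    Finset.sum_add_distrib, Finset.sum_add_distrib, Finset.sum_add_distrib,
    Finset.sum_neg_distrib, Finset.sum_neg_distrib,
    Finset.sum_neg_distrib, Finset.sum_neg_distrib, Finset.sum_neg_distrib,
    ← Finset.mul_sum, ← Finset.mul_sum, ← Finset.mul_sum, ← Finset.mul_sum, ← Finset.mul_sum,
    ← Finset.mul_sum]
  ring

lemma sum_eval (p hh : ℤ) (hph : p = 2 * hh) (hcop : IsCoprime p 5) (hp : p ≠ 0) :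
    (∑ j ∈ Finset.Icc 1 (p.natAbs - 1),
      (((Real.cos (Real.pi * j / p) / Real.sin (Real.pi * j / p) *
      (Real.cos (Real.pi * j * 5 / p) / Real.sin (Real.pi * j * 5 / p)) +
      2 * (-1:ℝ)^j * (1 / Real.sin (Real.pi * j / p) * (1 / Real.sin (Real.pi * j * 5 / p)))) : ℝ) : ℂ))
    * ((p.natAbs:ℂ))^2
    = -((p.natAbs:ℂ)) * (((Gd p.natAbs 0 + Gd p.natAbs 1 + Gd p.natAbs 5 + Gd p.natAbs 6
        + 8 * Gd p.natAbs (3+hh)) : ℤ) : ℂ)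
      + 12 * (∑ t ∈ Finset.range p.natAbs, (t:ℂ))^2 := by
  rw [Finset.sum_mul]
  rw [Finset.sum_congr rfl (fun j hj => step_j p hh hph hcop hp j hj)]
  rw [Finset.sum_comm]
  rw [Finset.sum_congr rfl (fun (t:ℕ) _ => Finset.sum_comm)]
  -- now: Σ_t Σ_s Σ_j F
  have hper : ∀ t : ℕ, ∀ s : ℕ,
      (∑ j ∈ Finset.Icc 1 (p.natAbs - 1),
        (-(((t:ℂ) * (s:ℂ)) * (Ee p (2*((t:ℤ)+5*(s:ℤ))*(j:ℤ)) + Ee p (2*((t:ℤ)+5*(s:ℤ)+1)*(j:ℤ))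
          + Ee p (2*((t:ℤ)+5*(s:ℤ)+5)*(j:ℤ)) + Ee p (2*((t:ℤ)+5*(s:ℤ)+6)*(j:ℤ))
          + 8 * Ee p (2*((t:ℤ)+5*(s:ℤ)+(3+hh))*(j:ℤ))))))
      = -(((t:ℂ) * (s:ℂ)) *
          ((if p ∣ ((t:ℤ)+5*(s:ℤ)) then ((p.natAbs:ℕ):ℂ) else 0)
          + (if p ∣ ((t:ℤ)+5*(s:ℤ)+1) then ((p.natAbs:ℕ):ℂ) else 0)
          + (if p ∣ ((t:ℤ)+5*(s:ℤ)+5) then ((p.natAbs:ℕ):ℂ) else 0)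
          + (if p ∣ ((t:ℤ)+5*(s:ℤ)+6) then ((p.natAbs:ℕ):ℂ) else 0)
          + 8 * (if p ∣ ((t:ℤ)+5*(s:ℤ)+(3+hh)) then ((p.natAbs:ℕ):ℂ) else 0)))
        + 12 * ((t:ℂ) * (s:ℂ)) := by
    intro t s
    rw [sum_lin (Finset.Icc 1 (p.natAbs - 1)) ((t:ℂ) * (s:ℂ))
      (fun j => Ee p (2*((t:ℤ)+5*(s:ℤ))*(j:ℤ))) (fun j => Ee p (2*((t:ℤ)+5*(s:ℤ)+1)*(j:ℤ)))
      (fun j => Ee p (2*((t:ℤ)+5*(s:ℤ)+5)*(j:ℤ))) (fun j => Ee p (2*((t:ℤ)+5*(s:ℤ)+6)*(j:ℤ)))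
      (fun j => Ee p (2*((t:ℤ)+5*(s:ℤ)+(3+hh))*(j:ℤ)))]
    rw [Cval p hp ((t:ℤ)+5*(s:ℤ)), Cval p hp ((t:ℤ)+5*(s:ℤ)+1), Cval p hp ((t:ℤ)+5*(s:ℤ)+5),
      Cval p hp ((t:ℤ)+5*(s:ℤ)+6), Cval p hp ((t:ℤ)+5*(s:ℤ)+(3+hh))]
    ring
  rw [Finset.sum_congr rfl (fun t _ => Finset.sum_congr rfl (fun s _ => hper t s))]
  -- swap t and s sums
  rw [Finset.sum_comm]
  -- per s: collapse the t-sums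
  have hs : ∀ s : ℕ,
      (∑ t ∈ Finset.range p.natAbs,
        (-(((t:ℂ) * (s:ℂ)) *
          ((if p ∣ ((t:ℤ)+5*(s:ℤ)) then ((p.natAbs:ℕ):ℂ) else 0)
          + (if p ∣ ((t:ℤ)+5*(s:ℤ)+1) then ((p.natAbs:ℕ):ℂ) else 0)
          + (if p ∣ ((t:ℤ)+5*(s:ℤ)+5) then ((p.natAbs:ℕ):ℂ) else 0)
          + (if p ∣ ((t:ℤ)+5*(s:ℤ)+6) then ((p.natAbs:ℕ):ℂ) else 0)
          + 8 * (if p ∣ ((t:ℤ)+5*(s:ℤ)+(3+hh)) then ((p.natAbs:ℕ):ℂ) else 0)))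
        + 12 * ((t:ℂ) * (s:ℂ))))
      = -((s:ℂ) * (((((-(5*(s:ℤ))) % ((p.natAbs:ℕ):ℤ) : ℤ):ℂ)) * ((p.natAbs:ℕ):ℂ)
          + ((((-(5*(s:ℤ)+1)) % ((p.natAbs:ℕ):ℤ) : ℤ):ℂ)) * ((p.natAbs:ℕ):ℂ)
          + ((((-(5*(s:ℤ)+5)) % ((p.natAbs:ℕ):ℤ) : ℤ):ℂ)) * ((p.natAbs:ℕ):ℂ)
          + ((((-(5*(s:ℤ)+6)) % ((p.natAbs:ℕ):ℤ) : ℤ):ℂ)) * ((p.natAbs:ℕ):ℂ)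
          + 8 * (((((-(5*(s:ℤ)+(3+hh))) % ((p.natAbs:ℕ):ℤ) : ℤ):ℂ)) * ((p.natAbs:ℕ):ℂ))))
        + 12 * ((s:ℂ) * (∑ t ∈ Finset.range p.natAbs, (t:ℂ))) := by
    intro s
    rw [sum_lin2 (Finset.range p.natAbs) ((s:ℂ))
      (fun t => (if p ∣ ((t:ℤ)+5*(s:ℤ)) then ((p.natAbs:ℕ):ℂ) else 0))
      (fun t => (if p ∣ ((t:ℤ)+5*(s:ℤ)+1) then ((p.natAbs:ℕ):ℂ) else 0))
      (fun t => (if p ∣ ((t:ℤ)+5*(s:ℤ)+5) then ((p.natAbs:ℕ):ℂ) else 0))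
      (fun t => (if p ∣ ((t:ℤ)+5*(s:ℤ)+6) then ((p.natAbs:ℕ):ℂ) else 0))
      (fun t => (if p ∣ ((t:ℤ)+5*(s:ℤ)+(3+hh)) then ((p.natAbs:ℕ):ℂ) else 0))
      (fun t => (t:ℂ))]
    have e0 := inner_collapse p hp s 0
    have e1 := inner_collapse p hp s 1
    have e5 := inner_collapse p hp s 5
    have e6 := inner_collapse p hp s 6
    have e8 := inner_collapse p hp s (3+hh)
    simp only [add_zero] at e0
    rw [e0, e1, e5, e6, e8]
  rw [Finset.sum_congr rfl (fun s _ => hs s)]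
  rw [sum_lin3 (Finset.range p.natAbs) ((p.natAbs:ℕ):ℂ)
    (fun s => (((-(5*(s:ℤ))) % ((p.natAbs:ℕ):ℤ) : ℤ):ℂ))
    (fun s => (((-(5*(s:ℤ)+1)) % ((p.natAbs:ℕ):ℤ) : ℤ):ℂ))
    (fun s => (((-(5*(s:ℤ)+5)) % ((p.natAbs:ℕ):ℤ) : ℤ):ℂ))
    (fun s => (((-(5*(s:ℤ)+6)) % ((p.natAbs:ℕ):ℤ) : ℤ):ℂ))
    (fun s => (((-(5*(s:ℤ)+(3+hh))) % ((p.natAbs:ℕ):ℤ) : ℤ):ℂ))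
    (fun s => (s:ℂ)) (∑ t ∈ Finset.range p.natAbs, (t:ℂ))]
  have hGd : ∀ d : ℤ, (∑ s ∈ Finset.range p.natAbs, (s:ℂ) * (((-(5*(s:ℤ)+d)) % ((p.natAbs:ℕ):ℤ) : ℤ):ℂ))
      = ((Gd p.natAbs d : ℤ):ℂ) := by
    intro d
    rw [Gd]
    push_cast
    ring
  have hGd0 : (∑ s ∈ Finset.range p.natAbs, (s:ℂ) * (((-(5*(s:ℤ))) % ((p.natAbs:ℕ):ℤ) : ℤ):ℂ))
      = ((Gd p.natAbs 0 : ℤ):ℂ) := by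
    rw [← hGd 0]
    refine Finset.sum_congr rfl fun s _ => ?_
    norm_num
  rw [hGd0, hGd 1, hGd 5, hGd 6, hGd (3+hh)]
  push_cast
  ring

/-- For `k ≠ 0`, `(10k-4)/5 = [[2k, 2, 2, 2, 2]]` and `σ(5, 10k-4, -1) = -4 - sgn k`. -/
theorem ncf_sigma_ten_k_sub_four (k : ℤ) (hk : k ≠ 0) :
    ncf [2 * k, 2, 2, 2, 2] = ((10 * k - 4 : ℤ) : ℚ) / 5 ∧
      sigmaFFU 5 (10 * k - 4) (-1) = -4 - ((Int.sign k : ℤ) : ℝ) := by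
  constructor
  · show (((2*k : ℤ)) : ℚ) - 1 / ncf [2,2,2,2] = _
    have h4 : ncf [2,2,2,2] = 5/4 := by
      show ((2:ℤ):ℚ) - 1 / ncf [2,2,2] = _
      have h3 : ncf [2,2,2] = 4/3 := by
        show ((2:ℤ):ℚ) - 1 / ncf [2,2] = _
        have h2 : ncf [2,2] = 3/2 := by
          show ((2:ℤ):ℚ) - 1 / ncf [2] = _
          show ((2:ℤ):ℚ) - 1 / ((2:ℤ):ℚ) = _
          norm_num
        rw [h2]; norm_num
      rw [h3]; norm_num
    rw [h4]
    push_cast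
    ring
  · set p : ℤ := 10 * k - 4 with hpdef
    have hp : p ≠ 0 := by omega
    have hph : p = 2 * (5*k - 2) := by omega
    have hcop : IsCoprime p 5 := ⟨1, 1 - 2*k, by rw [hpdef]; ring⟩
    have hsum := sum_eval p (5*k-2) hph hcop hp
    set m : ℕ := p.natAbs with hmdef
    have hm1 : 1 ≤ m := by have := Int.natAbs_pos.mpr hp; omega
    have hmC : (m:ℂ) ≠ 0 := by
      simp only [Ne, Nat.cast_eq_zero]; omega
    have hX2 : (∑ t ∈ Finset.range m, (t:ℂ)) * 2 = (m:ℂ) * ((m:ℂ) - 1) := by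
      have hnat := Finset.sum_range_id_mul_two m
      have h2 : (((∑ i ∈ Finset.range m, i) * 2 : ℕ) : ℂ) = ((m * (m-1) : ℕ) : ℂ) := by
        exact_mod_cast congrArg (Nat.cast : ℕ → ℂ) hnat
      push_cast at h2
      rw [Nat.cast_sub hm1] at h2
      push_cast at h2
      linear_combination h2
    set SR : ℝ := (∑ j ∈ Finset.Icc 1 (m - 1),
        ((Real.cos (Real.pi * j / p) / Real.sin (Real.pi * j / p) *
        (Real.cos (Real.pi * j * 5 / p) / Real.sin (Real.pi * j * 5 / p)) +
        2 * (-1:ℝ)^j * (1 / Real.sin (Real.pi * j / p) * (1 / Real.sin (Real.pi * j * 5 / p)))) : ℝ)) with hSRdef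
    have hofs : (SR : ℂ) = ∑ j ∈ Finset.Icc 1 (m - 1),
        (((Real.cos (Real.pi * j / p) / Real.sin (Real.pi * j / p) *
        (Real.cos (Real.pi * j * 5 / p) / Real.sin (Real.pi * j * 5 / p)) +
        2 * (-1:ℝ)^j * (1 / Real.sin (Real.pi * j / p) * (1 / Real.sin (Real.pi * j * 5 / p)))) : ℝ) : ℂ) := by
      rw [hSRdef]
      exact Complex.ofReal_sum _ _
    have hterm : ∀ j : ℕ,
        ((Real.cos (Real.pi * j / p) / Real.sin (Real.pi * j / p)) *
        (Real.cos (Real.pi * j * ((5:ℤ):ℝ) / p) / Real.sin (Real.pi * j * ((5:ℤ):ℝ) / p)) +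
        2 * ((-1:ℤ):ℝ) ^ j *
        ((1 / Real.sin (Real.pi * j / p)) * (1 / Real.sin (Real.pi * j * ((5:ℤ):ℝ) / p))))
        = ((Real.cos (Real.pi * j / p) / Real.sin (Real.pi * j / p) *
        (Real.cos (Real.pi * j * 5 / p) / Real.sin (Real.pi * j * 5 / p)) +
        2 * (-1:ℝ)^j * (1 / Real.sin (Real.pi * j / p) * (1 / Real.sin (Real.pi * j * 5 / p))))) := by
      intro j
      norm_num
    have hpR : (p:ℝ) ≠ 0 := Int.cast_ne_zero.mpr hp
    unfold sigmaFFU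
    rw [Finset.sum_congr rfl (fun j _ => hterm j), ← hSRdef]
    by_cases hkpos : 0 < k
    · have hgoalC : (SR : ℂ) = -5 * (m:ℂ) := by
        apply mul_right_cancel₀ (pow_ne_zero 2 hmC)
        rw [hofs, hsum]
        set n : ℕ := (k-1).toNat with hn
        have hmn : m = 10*n + 6 := by omega
        have hd : (3 + (5*k-2)) = 5*(n:ℤ)+6 := by omega
        rw [hd, hmn]
        rw [hmn] at hX2
        have hkeyC : (((Gd (10*n+6) 0 + Gd (10*n+6) 1 + Gd (10*n+6) 5 + Gd (10*n+6) 6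
            + 8 * Gd (10*n+6) (5*(n:ℤ)+6)) : ℤ) : ℂ) * 6
            = (18000)*(n:ℂ)^3 + (31800)*(n:ℂ)^2 + (18900)*(n:ℂ) + (3780) := by
          exact_mod_cast congrArg (Int.cast : ℤ → ℂ) (keyP n)
        linear_combination (norm := (push_cast; ring1)) (-(((10*n+6:ℕ)):ℂ)/6) * hkeyC
          + 3*(2*(∑ t ∈ Finset.range (10*n+6), (t:ℂ)) + (((10*n+6:ℕ)):ℂ)*((((10*n+6:ℕ)):ℂ)-1)) * hX2
      have hSRval : SR = -5 * (m:ℝ) := by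
        have h2 : (SR : ℂ) = ((-5 * (m:ℝ) : ℝ) : ℂ) := by rw [hgoalC]; push_cast; ring
        exact Complex.ofReal_injective h2
      rw [hSRval]
      have hsign : Int.sign k = 1 := Int.sign_eq_one_of_pos hkpos
      rw [hsign]
      have hmp : ((m:ℕ):ℝ) = (p:ℝ) := by
        have h3 : ((m:ℕ):ℤ) = p := by omega
        exact_mod_cast congrArg (Int.cast : ℤ → ℝ) h3
      rw [hmp]
      field_simp
      ring
    · have hgoalC : (SR : ℂ) = 3 * (m:ℂ) := by
        apply mul_right_cancel₀ (pow_ne_zero 2 hmC)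
        rw [hofs, hsum]
        set n : ℕ := (-k-1).toNat with hn
        have hmn : m = 10*n + 14 := by omega
        have hd : (3 + (5*k-2)) = -5*(n:ℤ)-4 := by omega
        rw [hd, hmn]
        rw [hmn] at hX2
        have hkeyC : (((Gd (10*n+14) 0 + Gd (10*n+14) 1 + Gd (10*n+14) 5 + Gd (10*n+14) 6
            + 8 * Gd (10*n+14) (-5*(n:ℤ)-4)) : ℤ) : ℂ) * 6
            = (18000)*(n:ℂ)^3 + (70200)*(n:ℂ)^2 + (90900)*(n:ℂ) + (39060) := by
          exact_mod_cast congrArg (Int.cast : ℤ → ℂ) (keyN n)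
        linear_combination (norm := (push_cast; ring1)) (-(((10*n+14:ℕ)):ℂ)/6) * hkeyC
          + 3*(2*(∑ t ∈ Finset.range (10*n+14), (t:ℂ)) + (((10*n+14:ℕ)):ℂ)*((((10*n+14:ℕ)):ℂ)-1)) * hX2
      have hSRval : SR = 3 * (m:ℝ) := by
        have h2 : (SR : ℂ) = ((3 * (m:ℝ) : ℝ) : ℂ) := by rw [hgoalC]; push_cast; ring
        exact Complex.ofReal_injective h2
      rw [hSRval]
      have hsign : Int.sign k = -1 := Int.sign_eq_neg_one_of_neg (by omega)
      rw [hsign]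
      have hmp : ((m:ℕ):ℝ) = -(p:ℝ) := by
        have h3 : ((m:ℕ):ℤ) = -p := by omega
        have h4 := congrArg (Int.cast : ℤ → ℝ) h3
        push_cast at h4
        exact h4
      rw [hmp]
      field_simp
      ring
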